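/- For every finite digraph D with root r, every ⊆-maximal r-flame subgraph F* of D satisfies λ_{F*}(r,v) = λ_D(r,v) for all v ∈ V−r. -/

import Mathlib

attribute [local instance] Classical.propDecidable

/-- A finite digraph: edges `E` with tail and head maps (parallel edges allowed). -/
structure Digraph' (V E : Type) where
  tail : E → V
  head : E → V

namespace Digraph'

variable {V E : Type} [Fintype V] [Fintype E]

/-- `es` is a directed walk from `r` to `v`. -/
def IsWalk (D : Digraph' V E) : V → V → List E → Prop
  | r, v, [] => r = v
  | r, v, e :: es => D.tail e = r ∧ D.IsWalk (D.head e) v es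

/-- `es` is a directed path from `r` to `v` using only edges of `F`. -/
def IsPathIn (D : Digraph' V E) (F : Set E) (r v : V) (es : List E) : Prop :=
  D.IsWalk r v es ∧ (∀ e ∈ es, e ∈ F) ∧ (r :: es.map D.head).Nodup

/-- The members of a list of paths are pairwise edge-disjoint. -/
def EdgeDisjoint (P : List (List E)) : Prop :=
  P.Pairwise (fun p q => ∀ e, e ∈ p → e ∉ q)

/-- The maximum number of pairwise edge-disjoint `r → v` paths inside `F`. -/
noncomputable def lam (D : Digraph' V E) (F : Set E) (r v : V) : ℕ :=
  sSup {k | ∃ P : List (List E), P.length = k ∧ (∀ p ∈ P, D.IsPathIn F r v p) ∧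
    EdgeDisjoint P}

/-- The set of edges of `F` whose head is `v`. -/
def inEdges (D : Digraph' V E) (F : Set E) (v : V) : Set E := {e ∈ F | D.head e = v}

/-- The in-degree of `v` in the subgraph `F`. -/
noncomputable def indeg (D : Digraph' V E) (F : Set E) (v : V) : ℕ :=
  (D.inEdges F v).ncard

/-- `I` arises as the set of last edges of a system of pairwise edge-disjoint
`r → v` paths in `F` (membership in the gammoid `G_F(v)`). -/
def InGammoid (D : Digraph' V E) (F : Set E) (r v : V) (I : Set E) : Prop :=
  ∃ P : List (List E), (∀ p ∈ P, D.IsPathIn F r v p) ∧ EdgeDisjoint P ∧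
    I = {e | ∃ p ∈ P, p.getLast? = some e}

/-- `F` is an `r`-flame: the in-degree of each `v ≠ r` equals λ_F(r,v). -/
def IsFlame (D : Digraph' V E) (r : V) (F : Set E) : Prop :=
  ∀ v, v ≠ r → D.indeg F v = D.lam F r v

/-- Total of `x` on the in-edges of `v`. -/
noncomputable def inflow (D : Digraph' V E) (x : E → ℝ) (v : V) : ℝ :=
  ∑ e, if D.head e = v then x e else 0

/-- Total of `x` on the out-edges of `v`. -/
noncomputable def outflow (D : Digraph' V E) (x : E → ℝ) (v : V) : ℝ :=
  ∑ e, if D.tail e = v then x e else 0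

/-- Total of `x` on the edges entering the vertex set `W`. -/
noncomputable def rhoSet (D : Digraph' V E) (x : E → ℝ) (W : Set V) : ℝ :=
  ∑ e, if D.head e ∈ W ∧ D.tail e ∉ W then x e else 0

/-- `x` is a (nonnegative) `r → v` flow. -/
def IsFlow (D : Digraph' V E) (r v : V) (x : E → ℝ) : Prop :=
  (∀ e, 0 ≤ x e) ∧ (∀ u, u ≠ r → u ≠ v → D.inflow x u = D.outflow x u) ∧
    D.inflow x r = 0 ∧ D.outflow x v = 0

/-- The flow-connectivity from `r` to `v` under capacity `c`. -/
noncomputable def lamF (D : Digraph' V E) (r v : V) (c : E → ℝ) : ℝ :=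
  sSup {a | ∃ x, D.IsFlow r v x ∧ x ≤ c ∧ D.outflow x r = a}

/-- Characteristic vector of an edge. -/
noncomputable def chi (e : E) : E → ℝ := fun e' => if e' = e then 1 else 0

/-- Restriction of `x` to the in-edges of `v` (zero elsewhere). -/
noncomputable def restrictIn (D : Digraph' V E) (v : V) (x : E → ℝ) : E → ℝ :=
  fun e => if D.head e = v then x e else 0

/-- The polygammoid `G_c(v)`: restrictions to the in-edges of `v`
of `r → v` flows bounded by `c`. -/
def polygammoid (D : Digraph' V E) (r v : V) (c : E → ℝ) : Set (E → ℝ) :=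
  {s | ∃ x, D.IsFlow r v x ∧ x ≤ c ∧ D.restrictIn v x = s}

/-- `D` has no parallel edges. -/
def NoParallel (D : Digraph' V E) : Prop :=
  ∀ e e', D.tail e = D.tail e' → D.head e = D.head e' → e = e'

/-- `es` is a directed cycle. -/
def IsCycle (D : Digraph' V E) (es : List E) : Prop :=
  es ≠ [] ∧ ∃ u, D.IsWalk u u es ∧ (es.map D.head).Nodup

/-- Characteristic vector of a list of edges. -/
noncomputable def charVec (es : List E) : E → ℝ :=
  fun e => ((es.filter (fun e' => e' = e)).length : ℝ)

end Digraph'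

namespace Digraph'
set_option linter.unusedSectionVars false
set_option linter.unusedVariables false

variable {V E : Type} [Fintype V] [Fintype E] (D : Digraph' V E)

theorem isWalk_append {r v : V} (es₁ es₂ : List E) :
    D.IsWalk r v (es₁ ++ es₂) ↔ ∃ m, D.IsWalk r m es₁ ∧ D.IsWalk m v es₂ := by
  induction es₁ generalizing r with
  | nil => simp [IsWalk]
  | cons e tl ih =>
    constructor
    · rintro ⟨h1, h2⟩
      obtain ⟨m, hm1, hm2⟩ := ih.1 h2
      exact ⟨m, ⟨h1, hm1⟩, hm2⟩
    · rintro ⟨m, ⟨h1, hm1⟩, hm2⟩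
      exact ⟨h1, ih.2 ⟨m, hm1, hm2⟩⟩

theorem walk_getLast? {r v : V} {es : List E} (h : D.IsWalk r v es) (hne : es ≠ []) :
    (es.map D.head).getLast? = some v := by
  induction es generalizing r with
  | nil => exact absurd rfl hne
  | cons e tl ih =>
    obtain ⟨-, hw⟩ := h
    cases tl with
    | nil =>
      obtain rfl : D.head e = v := hw
      simp
    | cons t ts =>
      have h2 := ih hw (by simp)
      simpa [List.getLast?_cons_cons] using h2

theorem walk_tails {r v : V} {es : List E} (h : D.IsWalk r v es) (hne : es ≠ []) :
    es.map D.tail = (r :: es.map D.head).dropLast := by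
  induction es generalizing r with
  | nil => exact absurd rfl hne
  | cons e tl ih =>
    obtain ⟨ht, hw⟩ := h
    rcases eq_or_ne tl [] with rfl | hne'
    · simp [ht]
    · have := ih hw hne'
      have hmt : tl.map D.head ≠ [] := by simpa using hne'
      rw [List.map_cons, List.map_cons, this, ht]
      rw [List.dropLast_cons₂]

theorem walk_mid {m v : V} {xs : List E} {f : E} {ys : List E}
    (h : D.IsWalk m v (xs ++ f :: ys)) : D.IsWalk (D.head f) v ys := by
  rcases (D.isWalk_append xs (f :: ys)).1 h with ⟨m', -, h2⟩
  exact h2.2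

theorem exists_path_of_walk {w v : V} {es : List E} (h : D.IsWalk w v es) :
    ∃ es', D.IsWalk w v es' ∧ (∀ e ∈ es', e ∈ es) ∧ (w :: es'.map D.head).Nodup := by
  induction es generalizing w with
  | nil => exact ⟨[], h, by simp, by simp⟩
  | cons e tl ih =>
    obtain ⟨hte, hw⟩ := h
    obtain ⟨tl', hw', hsub, hnd⟩ := ih hw
    by_cases hmem : w ∈ (D.head e :: tl'.map D.head)
    · rcases List.mem_cons.1 hmem with heq | hmem'
      · subst heq
        exact ⟨tl', hw', fun x hx => List.mem_cons_of_mem _ (hsub x hx), hnd⟩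
      · obtain ⟨f, hf, hfw⟩ := List.mem_map.1 hmem'
        obtain ⟨xs, ys, rfl⟩ := List.append_of_mem hf
        refine ⟨ys, ?_, ?_, ?_⟩
        · rw [← hfw]; exact D.walk_mid hw'
        · intro x hx
          exact List.mem_cons_of_mem _ (hsub x (by simp [hx]))
        · have : ((D.head e :: xs.map D.head) ++ (D.head f :: ys.map D.head)).Nodup := by
            simpa using hnd
          rw [← hfw]
          exact this.of_append_right
    · exact ⟨e :: tl', ⟨hte, hw'⟩,
        fun x hx => by
          rcases List.mem_cons.1 hx with rfl | hx
          · exact List.mem_cons_self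
          · exact List.mem_cons_of_mem _ (hsub x hx),
        by simpa [hnd] using hmem⟩

theorem nodup_filter_eq_length {α : Type*} {l : List α} (hl : l.Nodup) (u : α) :
    (l.filter (fun a => a = u)).length = if u ∈ l then 1 else 0 := by
  induction l with
  | nil => simp
  | cons a tl ih =>
    simp only [List.nodup_cons] at hl
    by_cases h : a = u
    · subst h
      have : a ∉ tl := hl.1
      simp [List.filter_cons, ih hl.2, this]
    · simp [List.filter_cons, h, ih hl.2, Ne.symm h]

theorem filter_head_length {u : V} (es : List E) :
    (es.filter (fun e => D.head e = u)).length
      = ((es.map D.head).filter (fun a => a = u)).length := by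
  induction es with
  | nil => simp
  | cons e tl ih => by_cases h : D.head e = u <;> simp [List.filter_cons, h, ih]

theorem filter_tail_length {u : V} (es : List E) :
    (es.filter (fun e => D.tail e = u)).length
      = ((es.map D.tail).filter (fun a => a = u)).length := by
  induction es with
  | nil => simp
  | cons e tl ih => by_cases h : D.tail e = u <;> simp [List.filter_cons, h, ih]

/-- Counting in/out edges of a vertex along a simple path. -/
theorem path_count_head {r v u : V} {es : List E} (hw : D.IsWalk r v es)
    (hnd : (r :: es.map D.head).Nodup) :
    (es.filter (fun e => D.head e = u)).length
      = if u ∈ es.map D.head then 1 else 0 := by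
  rw [D.filter_head_length]
  exact nodup_filter_eq_length (hnd.of_cons) u

theorem path_count_tail {r v u : V} {es : List E} (hw : D.IsWalk r v es)
    (hnd : (r :: es.map D.head).Nodup) (hne : es ≠ []) :
    (es.filter (fun e => D.tail e = u)).length
      = if u ∈ es.map D.tail then 1 else 0 := by
  rw [D.filter_tail_length]
  refine nodup_filter_eq_length ?_ u
  rw [D.walk_tails hw hne]
  exact hnd.sublist (List.dropLast_sublist _)

theorem mem_tails_iff {r v u : V} {es : List E} (hw : D.IsWalk r v es)
    (hnd : (r :: es.map D.head).Nodup) (hne : es ≠ []) :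
    u ∈ es.map D.tail ↔ (u = r ∨ (u ∈ es.map D.head ∧ u ≠ v)) := by
  have hmt : es.map D.head ≠ [] := by simpa using hne
  rw [D.walk_tails hw hne]
  rw [List.dropLast_cons_of_ne_nil hmt, List.mem_cons]
  have hlast := D.walk_getLast? hw hne
  have hv : (es.map D.head).getLast hmt = v := by
    rw [List.getLast?_eq_getLast hmt] at hlast
    exact Option.some_injective _ hlast
  have hdec : (es.map D.head).dropLast ++ [v] = es.map D.head := by
    rw [← hv]; exact List.dropLast_append_getLast hmt
  constructor
  · rintro (rfl | hmem)
    · exact Or.inl rfl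
    · refine Or.inr ⟨?_, ?_⟩
      · rw [← hdec]; exact List.mem_append_left _ hmem
      · rintro rfl
        have : (es.map D.head).Nodup := hnd.of_cons
        rw [← hdec] at this
        exact (List.disjoint_of_nodup_append this) hmem (by simp)
  · rintro (rfl | ⟨hmem, hne'⟩)
    · exact Or.inl rfl
    · refine Or.inr ?_
      rw [← hdec] at hmem
      rcases List.mem_append.1 hmem with h | h
      · exact h
      · simp at h; exact absurd h hne'

end Digraph'

namespace Digraph'
set_option linter.unusedSectionVars false
set_option linter.unusedVariables false

variable {V E : Type} [Fintype V] [Fintype E] (D : Digraph' V E)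

/-- The set whose `sSup` is `lam`. -/
def lamSet (F : Set E) (r v : V) : Set ℕ :=
  {k | ∃ P : List (List E), P.length = k ∧ (∀ p ∈ P, D.IsPathIn F r v p) ∧ EdgeDisjoint P}

theorem lam_eq_sSup (F : Set E) (r v : V) : D.lam F r v = sSup (D.lamSet F r v) := rfl

theorem zero_mem_lamSet (F : Set E) (r v : V) : 0 ∈ D.lamSet F r v :=
  ⟨[], rfl, by simp, List.Pairwise.nil⟩

theorem path_edges_nodup {F : Set E} {r v : V} {es : List E} (h : D.IsPathIn F r v es) :
    es.Nodup :=
  (h.2.2.of_cons).of_map _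

theorem path_ne_nil {F : Set E} {r v : V} {es : List E} (h : D.IsPathIn F r v es)
    (hv : v ≠ r) : es ≠ [] := by
  rintro rfl
  exact hv h.1.symm

theorem length_le_flatten_length (P : List (List E)) (h : ∀ p ∈ P, p ≠ []) :
    P.length ≤ P.flatten.length := by
  induction P with
  | nil => simp
  | cons p tl ih =>
    simp only [List.flatten_cons, List.length_append, List.length_cons]
    have h1 : 0 < p.length := List.length_pos_iff.2 (h p (by simp))
    have h2 := ih (fun q hq => h q (by simp [hq]))
    omega

theorem lamSet_bddAbove {F : Set E} {r v : V} (hv : v ≠ r) {k : ℕ}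
    (hk : k ∈ D.lamSet F r v) : k ≤ Fintype.card E := by
  obtain ⟨P, rfl, hP, hdisj⟩ := hk
  have hnd : P.flatten.Nodup := by
    rw [List.nodup_flatten]
    exact ⟨fun p hp => D.path_edges_nodup (hP p hp),
      hdisj.imp (fun h a ha hb => h a ha hb)⟩
  calc P.length ≤ P.flatten.length :=
        length_le_flatten_length P (fun p hp => D.path_ne_nil (hP p hp) hv)
    _ ≤ Fintype.card E := hnd.length_le_card

theorem lamSet_bdd {F : Set E} {r v : V} (hv : v ≠ r) : BddAbove (D.lamSet F r v) :=
  ⟨Fintype.card E, fun k hk => D.lamSet_bddAbove hv hk⟩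

theorem lam_spec {F : Set E} {r v : V} (hv : v ≠ r) :
    ∃ P : List (List E), P.length = D.lam F r v ∧ (∀ p ∈ P, D.IsPathIn F r v p) ∧
      EdgeDisjoint P :=
  Nat.sSup_mem ⟨0, D.zero_mem_lamSet F r v⟩ (D.lamSet_bdd hv)

theorem le_lam {F : Set E} {r v : V} (hv : v ≠ r) {P : List (List E)}
    (hP : ∀ p ∈ P, D.IsPathIn F r v p) (hdisj : EdgeDisjoint P) :
    P.length ≤ D.lam F r v :=
  le_csSup (D.lamSet_bdd hv) ⟨P, rfl, hP, hdisj⟩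

theorem pathIn_mono {F G : Set E} (hsub : F ⊆ G) {r v : V} {es : List E}
    (h : D.IsPathIn F r v es) : D.IsPathIn G r v es :=
  ⟨h.1, fun e he => hsub (h.2.1 e he), h.2.2⟩

theorem lam_mono {F G : Set E} (hsub : F ⊆ G) {r v : V} (hv : v ≠ r) :
    D.lam F r v ≤ D.lam G r v := by
  obtain ⟨P, hlen, hP, hdisj⟩ := D.lam_spec (F := F) (r := r) hv
  rw [← hlen]
  exact D.le_lam hv (fun p hp => D.pathIn_mono hsub (hP p hp)) hdisj

theorem path_getLast_head {F : Set E} {r v : V} {es : List E} (h : D.IsPathIn F r v es)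
    (hne : es ≠ []) : D.head (es.getLast hne) = v := by
  have h1 := D.walk_getLast? h.1 hne
  rw [List.getLast?_eq_getLast (by simpa using hne), Option.some_inj] at h1
  rw [← h1, List.getLast_map]

theorem exists_lasts {F : Set E} {r v : V} (hv : v ≠ r) (P : List (List E))
    (hP : ∀ p ∈ P, D.IsPathIn F r v p) (hdisj : EdgeDisjoint P) :
    ∃ s : Finset E, s.card = P.length ∧ ∀ e ∈ s, e ∈ D.inEdges F v ∧ ∃ p ∈ P, e ∈ p := by
  induction P with
  | nil => exact ⟨∅, by simp, by simp⟩
  | cons p tl ih =>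
    obtain ⟨s, hcard, hs⟩ := ih (fun q hq => hP q (List.mem_cons_of_mem _ hq))
      (List.Pairwise.of_cons hdisj)
    have hpth := hP p (List.mem_cons_self)
    have hne : p ≠ [] := D.path_ne_nil hpth hv
    set e := p.getLast hne with he
    have hep : e ∈ p := List.getLast_mem hne
    have hnotin : e ∉ s := by
      intro hin
      obtain ⟨q, hq, heq⟩ := (hs e hin).2
      exact (List.rel_of_pairwise_cons hdisj hq) e hep heq
    refine ⟨insert e s, by rw [Finset.card_insert_of_notMem hnotin, hcard]; simp, ?_⟩
    intro x hx
    rcases Finset.mem_insert.1 hx with rfl | hx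
    · exact ⟨⟨hpth.2.1 _ hep, D.path_getLast_head hpth hne⟩,
        p, List.mem_cons_self, hep⟩
    · obtain ⟨h1, q, hq, h2⟩ := hs x hx
      exact ⟨h1, q, List.mem_cons_of_mem _ hq, h2⟩

theorem lam_le_indeg {F : Set E} {r v : V} (hv : v ≠ r) :
    D.lam F r v ≤ D.indeg F v := by
  obtain ⟨P, hlen, hP, hdisj⟩ := D.lam_spec (F := F) (r := r) hv
  obtain ⟨s, hcard, hs⟩ := D.exists_lasts hv P hP hdisj
  rw [← hlen, ← hcard, indeg]
  have hsub : ↑s ⊆ D.inEdges F v := fun e he => (hs e he).1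
  calc s.card = (↑s : Set E).ncard := (Set.ncard_coe_finset s).symm
    _ ≤ _ := Set.ncard_le_ncard hsub (Set.toFinite _)

end Digraph'

namespace Digraph'
set_option linter.unusedSectionVars false
set_option linter.unusedVariables false
set_option maxHeartbeats 1000000

variable {V E : Type} [Fintype V] [Fintype E] (D : Digraph' V E)

/-- In-edges of `u` within the edge set `A`. -/
noncomputable def insF (A : Finset E) (u : V) : Finset E :=
  A.filter (fun e => D.head e = u)

/-- Out-edges of `u` within the edge set `A`. -/
noncomputable def outsF (A : Finset E) (u : V) : Finset E :=
  A.filter (fun e => D.tail e = u)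

/-- A 0/1 flow from `r` to `v` with support `A` inside `H`. -/
def NFlow (H : Set E) (r v : V) (A : Finset E) : Prop :=
  ↑A ⊆ H ∧ (∀ u, u ≠ r → u ≠ v → (D.insF A u).card = (D.outsF A u).card) ∧
    (D.insF A r).card = 0 ∧ (D.outsF A v).card = 0

theorem sum_insF (A : Finset E) : ∑ u : V, (D.insF A u).card = A.card :=
  (Finset.card_eq_sum_card_fiberwise
    (fun e _ => Finset.mem_univ (D.head e))).symm

theorem sum_outsF (A : Finset E) : ∑ u : V, (D.outsF A u).card = A.card :=
  (Finset.card_eq_sum_card_fiberwise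
    (fun e _ => Finset.mem_univ (D.tail e))).symm

theorem flow_value {H : Set E} {r v : V} {A : Finset E} (hflow : D.NFlow H r v A)
    (hv : v ≠ r) : (D.insF A v).card = (D.outsF A r).card := by
  obtain ⟨-, hcons, hinr, houtv⟩ := hflow
  have h1 : ∑ u : V, (((D.insF A u).card : ℤ) - (D.outsF A u).card) = 0 := by
    rw [Finset.sum_sub_distrib, ← Nat.cast_sum, ← Nat.cast_sum, D.sum_insF,
      D.sum_outsF, sub_self]
  have h2 : ∑ u ∈ ({v, r} : Finset V),
      (((D.insF A u).card : ℤ) - (D.outsF A u).card) = 0 := by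
    rw [← h1]
    refine Finset.sum_subset (Finset.subset_univ _) ?_
    intro u _ hu
    simp only [Finset.mem_insert, Finset.mem_singleton, not_or] at hu
    rw [hcons u hu.2 hu.1, sub_self]
  rw [Finset.sum_pair hv] at h2
  rw [hinr, houtv] at h2
  push_cast at h2
  omega

/-- Edges of `H` entering the vertex set `W`. -/
noncomputable def cutEdges (H : Set E) (W : Set V) : Finset E :=
  Finset.univ.filter (fun e => e ∈ H ∧ D.head e ∈ W ∧ D.tail e ∉ W)

/-- The capacity of the cut `W` in `H`. -/
noncomputable def rhoN (H : Set E) (W : Set V) : ℕ := (D.cutEdges H W).card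

theorem mem_cutEdges {H : Set E} {W : Set V} {e : E} :
    e ∈ D.cutEdges H W ↔ e ∈ H ∧ D.head e ∈ W ∧ D.tail e ∉ W := by
  simp [cutEdges]

theorem filter_enter_eq_cutEdges (A : Finset E) (W : Set V) :
    A.filter (fun e => D.head e ∈ W ∧ D.tail e ∉ W) = D.cutEdges (↑A) W := by
  ext x
  simp [cutEdges, Finset.mem_filter]

theorem filter_leave_eq_cutEdges (A : Finset E) (W : Set V) :
    A.filter (fun e => D.tail e ∈ W ∧ D.head e ∉ W)
      = D.cutEdges (↑A) {u | u ∉ W} := by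
  ext x
  simp only [cutEdges, Finset.mem_filter, Finset.mem_univ, true_and,
    Finset.mem_coe, Set.mem_setOf_eq, not_not]
  tauto

theorem sum_insF_cut (A : Finset E) (W : Set V) :
    ∑ u ∈ Finset.univ.filter (fun u => u ∈ W), (D.insF A u).card
      = (A.filter (fun e => D.head e ∈ W)).card := by
  rw [Finset.card_eq_sum_card_fiberwise
    (f := D.head) (t := Finset.univ.filter (fun u => u ∈ W))
    (fun e he => by simp [(Finset.mem_filter.1 he).2])]
  refine Finset.sum_congr rfl ?_
  intro u hu
  simp only [Finset.mem_filter, Finset.mem_univ, true_and] at hu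
  unfold insF
  congr 1
  ext e
  simp only [Finset.mem_filter]
  constructor
  · rintro ⟨h1, h2⟩
    exact ⟨⟨h1, by rw [h2]; exact hu⟩, h2⟩
  · rintro ⟨⟨h1, -⟩, h2⟩
    exact ⟨h1, h2⟩

theorem sum_outsF_cut (A : Finset E) (W : Set V) :
    ∑ u ∈ Finset.univ.filter (fun u => u ∈ W), (D.outsF A u).card
      = (A.filter (fun e => D.tail e ∈ W)).card := by
  rw [Finset.card_eq_sum_card_fiberwise
    (f := D.tail) (t := Finset.univ.filter (fun u => u ∈ W))
    (fun e he => by simp [(Finset.mem_filter.1 he).2])]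
  refine Finset.sum_congr rfl ?_
  intro u hu
  simp only [Finset.mem_filter, Finset.mem_univ, true_and] at hu
  unfold outsF
  congr 1
  ext e
  simp only [Finset.mem_filter]
  constructor
  · rintro ⟨h1, h2⟩
    exact ⟨⟨h1, by rw [h2]; exact hu⟩, h2⟩
  · rintro ⟨⟨h1, -⟩, h2⟩
    exact ⟨h1, h2⟩

/-- Flow value equals net flow across any `r`–`v` cut. -/
theorem flow_cut {H : Set E} {r v : V} {A : Finset E} {W : Set V}
    (hflow : D.NFlow H r v A) (hvr : v ≠ r) (hvW : v ∈ W) (hrW : r ∉ W) :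
    (D.insF A v).card + (A.filter (fun e => D.tail e ∈ W ∧ D.head e ∉ W)).card
      = (A.filter (fun e => D.head e ∈ W ∧ D.tail e ∉ W)).card := by
  obtain ⟨-, hcons, hinr, houtv⟩ := hflow
  set WF := Finset.univ.filter (fun u => u ∈ W) with hWF
  have hsum : ∑ u ∈ WF, (((D.insF A u).card : ℤ) - (D.outsF A u).card)
      = (D.insF A v).card := by
    have hvWF : v ∈ WF := by simp [hWF, hvW]
    rw [Finset.sum_eq_single_of_mem v hvWF]
    · rw [houtv]; push_cast; ring
    · intro u hu hne
      have hur : u ≠ r := by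
        rintro rfl
        simp only [hWF, Finset.mem_filter] at hu
        exact hrW hu.2
      rw [hcons u hur hne, sub_self]
  rw [Finset.sum_sub_distrib, ← Nat.cast_sum, ← Nat.cast_sum,
    D.sum_insF_cut, D.sum_outsF_cut] at hsum
  have h1 := Finset.card_filter_add_card_filter_not
    (s := A.filter (fun e => D.head e ∈ W)) (p := fun e => D.tail e ∉ W)
  rw [Finset.filter_filter, Finset.filter_filter] at h1
  simp only [not_not] at h1
  have h2 := Finset.card_filter_add_card_filter_not
    (s := A.filter (fun e => D.tail e ∈ W)) (p := fun e => D.head e ∉ W)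
  rw [Finset.filter_filter, Finset.filter_filter] at h2
  simp only [not_not] at h2
  have hcomm : (A.filter (fun e => D.tail e ∈ W ∧ D.head e ∈ W))
      = (A.filter (fun e => D.head e ∈ W ∧ D.tail e ∈ W)) := by
    ext x
    simp only [Finset.mem_filter]
    tauto
  rw [hcomm] at h2
  omega

/-- Flow value equals net flow across any cut, `cutEdges` form. -/
theorem flow_cut' {H : Set E} {r v : V} {A : Finset E} {W : Set V}
    (hflow : D.NFlow H r v A) (hvr : v ≠ r) (hvW : v ∈ W) (hrW : r ∉ W) :
    (D.insF A v).card + (D.cutEdges (↑A) {u | u ∉ W}).card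
      = (D.cutEdges (↑A) W).card := by
  have h := D.flow_cut hflow hvr hvW hrW
  rw [D.filter_enter_eq_cutEdges, D.filter_leave_eq_cutEdges] at h
  exact h

/-- Easy direction of Menger: every flow value is at most every cut. -/
theorem flow_le_cut {H : Set E} {r v : V} {A : Finset E} {W : Set V}
    (hflow : D.NFlow H r v A) (hvr : v ≠ r) (hvW : v ∈ W) (hrW : r ∉ W) :
    (D.insF A v).card ≤ D.rhoN H W := by
  have h := D.flow_cut hflow hvr hvW hrW
  have hsub : A.filter (fun e => D.head e ∈ W ∧ D.tail e ∉ W) ⊆ D.cutEdges H W := by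
    intro e he
    simp only [Finset.mem_filter] at he
    simp only [cutEdges, Finset.mem_filter, Finset.mem_univ, true_and]
    exact ⟨hflow.1 he.1, he.2⟩
  have := Finset.card_le_card hsub
  unfold rhoN
  omega

end Digraph'

namespace Digraph'
set_option linter.unusedSectionVars false
set_option linter.unusedVariables false
set_option maxHeartbeats 1000000

variable {V E : Type} [Fintype V] [Fintype E] (D : Digraph' V E)

theorem path_head_mem {r v : V} {es : List E} (hw : D.IsWalk r v es) (hne : es ≠ []) :
    v ∈ es.map D.head := by
  have hmt : es.map D.head ≠ [] := by simpa using hne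
  have h1 := D.walk_getLast? hw hne
  rw [List.getLast?_eq_getLast hmt, Option.some_inj] at h1
  rw [← h1]
  exact List.getLast_mem hmt

theorem path_filter_head_tail {F : Set E} {r v u : V} {es : List E}
    (hp : D.IsPathIn F r v es) (hne : es ≠ []) (hur : u ≠ r) (huv : u ≠ v) :
    (es.filter (fun e => D.head e = u)).length
      = (es.filter (fun e => D.tail e = u)).length := by
  rw [D.path_count_head hp.1 hp.2.2, D.path_count_tail hp.1 hp.2.2 hne]
  simp [D.mem_tails_iff hp.1 hp.2.2 hne, hur, huv]

theorem path_filter_head_v {F : Set E} {r v : V} {es : List E}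
    (hp : D.IsPathIn F r v es) (hne : es ≠ []) :
    (es.filter (fun e => D.head e = v)).length = 1 := by
  rw [D.path_count_head hp.1 hp.2.2, if_pos (D.path_head_mem hp.1 hne)]

theorem path_filter_tail_v {F : Set E} {r v : V} {es : List E}
    (hp : D.IsPathIn F r v es) (hne : es ≠ []) (hvr : v ≠ r) :
    (es.filter (fun e => D.tail e = v)).length = 0 := by
  rw [D.path_count_tail hp.1 hp.2.2 hne]
  simp [D.mem_tails_iff hp.1 hp.2.2 hne, hvr]

theorem path_filter_head_r {F : Set E} {r v : V} {es : List E}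
    (hp : D.IsPathIn F r v es) :
    (es.filter (fun e => D.head e = r)).length = 0 := by
  rw [D.path_count_head hp.1 hp.2.2]
  have := hp.2.2
  rw [List.nodup_cons] at this
  simp [this.1]

theorem path_filter_tail_r {F : Set E} {r v : V} {es : List E}
    (hp : D.IsPathIn F r v es) (hne : es ≠ []) :
    (es.filter (fun e => D.tail e = r)).length = 1 := by
  rw [D.path_count_tail hp.1 hp.2.2 hne]
  simp [D.mem_tails_iff hp.1 hp.2.2 hne]

theorem flatten_filter_length (P : List (List E)) (q : E → Prop) [DecidablePred q] :
    (P.flatten.filter (fun e => q e)).length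
      = (P.map (fun es => (es.filter (fun e => q e)).length)).sum := by
  induction P with
  | nil => simp
  | cons p tl ih =>
    rw [List.flatten_cons, List.filter_append, List.length_append, ih,
      List.map_cons, List.sum_cons]

theorem toFinset_filter_card {l : List E} (hnd : l.Nodup) (q : E → Prop)
    [DecidablePred q] :
    (l.toFinset.filter (fun e => q e)).card = (l.filter (fun e => q e)).length := by
  induction l with
  | nil => simp
  | cons a tl ih =>
    rw [List.nodup_cons] at hnd
    by_cases hq : q a
    · have hnm : a ∉ Finset.filter (fun e => q e) tl.toFinset := by
        simp [hnd.1]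
      simp [Finset.filter_insert, hq, Finset.card_insert_of_notMem hnm,
        ih hnd.2, List.filter_cons]
    · simp [Finset.filter_insert, hq, ih hnd.2, List.filter_cons]

/-- From an edge-disjoint path system to a 0/1-flow of the same value. -/
theorem flow_of_paths {H : Set E} {r v : V} (hv : v ≠ r) (P : List (List E))
    (hP : ∀ p ∈ P, D.IsPathIn H r v p) (hdisj : EdgeDisjoint P) :
    ∃ A : Finset E, D.NFlow H r v A ∧ (D.insF A v).card = P.length := by
  classical
  have hnd : P.flatten.Nodup := by
    rw [List.nodup_flatten]
    exact ⟨fun p hp => D.path_edges_nodup (hP p hp),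
      hdisj.imp (fun h a ha hb => h a ha hb)⟩
  set A := P.flatten.toFinset with hA
  have hins : ∀ u, (D.insF A u).card
      = (P.map (fun es => (es.filter (fun e => D.head e = u)).length)).sum := by
    intro u
    rw [insF, hA, toFinset_filter_card hnd, flatten_filter_length]
  have houts : ∀ u, (D.outsF A u).card
      = (P.map (fun es => (es.filter (fun e => D.tail e = u)).length)).sum := by
    intro u
    rw [outsF, hA, toFinset_filter_card hnd, flatten_filter_length]
  have hnenil : ∀ p ∈ P, p ≠ [] := fun p hp => D.path_ne_nil (hP p hp) hv
  refine ⟨A, ⟨?_, ?_, ?_, ?_⟩, ?_⟩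
  · intro e he
    rw [hA] at he
    simp only [Finset.coe_insert, List.coe_toFinset, Set.mem_setOf_eq,
      List.mem_toFinset] at he
    obtain ⟨p, hp, hep⟩ := List.mem_flatten.1 (by simpa using he)
    exact (hP p hp).2.1 e hep
  · intro u hur huv
    rw [hins, houts]
    congr 1
    refine List.map_congr_left ?_
    intro p hp
    exact D.path_filter_head_tail (hP p hp) (hnenil p hp) hur huv
  · rw [hins]
    have : ∀ p ∈ P, (p.filter (fun e => D.head e = r)).length = 0 :=
      fun p hp => D.path_filter_head_r (hP p hp)
    rw [List.map_congr_left this]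
    simp
  · rw [houts]
    have : ∀ p ∈ P, (p.filter (fun e => D.tail e = v)).length = 0 :=
      fun p hp => D.path_filter_tail_v (hP p hp) (hnenil p hp) hv
    rw [List.map_congr_left this]
    simp
  · rw [hins]
    have : ∀ p ∈ P, (p.filter (fun e => D.head e = v)).length = 1 :=
      fun p hp => D.path_filter_head_v (hP p hp) (hnenil p hp)
    rw [List.map_congr_left this]
    simp [List.map_const']

theorem insF_erase (A : Finset E) (e : E) (he : e ∈ A) (u : V) :
    (D.insF (A.erase e) u).card
      = (D.insF A u).card - (if D.head e = u then 1 else 0) := by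
  unfold insF
  rw [Finset.filter_erase]
  by_cases h : D.head e = u
  · rw [Finset.card_erase_of_mem (by simp [Finset.mem_filter, he, h]), if_pos h]
  · rw [Finset.erase_eq_of_notMem (by simp [Finset.mem_filter, h]), if_neg h]
    simp

theorem outsF_erase (A : Finset E) (e : E) (he : e ∈ A) (u : V) :
    (D.outsF (A.erase e) u).card
      = (D.outsF A u).card - (if D.tail e = u then 1 else 0) := by
  unfold outsF
  rw [Finset.filter_erase]
  by_cases h : D.tail e = u
  · rw [Finset.card_erase_of_mem (by simp [Finset.mem_filter, he, h]), if_pos h]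
  · rw [Finset.erase_eq_of_notMem (by simp [Finset.mem_filter, h]), if_neg h]
    simp

/-- Walk extraction from an excess-flow edge set. -/
theorem exists_walk_in_flow (v : V) :
    ∀ (n : ℕ) (A : Finset E), A.card ≤ n → ∀ w : V,
    (∀ u, u ≠ v → (D.insF A u).card ≤ (D.outsF A u).card) →
    ((D.insF A w).card < (D.outsF A w).card ∨ w = v) →
    ∃ es, D.IsWalk w v es ∧ ∀ e ∈ es, e ∈ A := by
  intro n
  induction n with
  | zero =>
    intro A hcard w hcons hw
    rcases hw with hlt | rfl
    · exfalso
      have : A = ∅ := Finset.card_eq_zero.1 (le_antisymm hcard (Nat.zero_le _))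
      subst this
      simp [insF, outsF] at hlt
    · exact ⟨[], rfl, by simp⟩
  | succ n ih =>
    intro A hcard w hcons hw
    rcases hw with hlt | rfl
    swap
    · exact ⟨[], rfl, by simp⟩
    have houtpos : 0 < (D.outsF A w).card := by omega
    obtain ⟨e, hemem⟩ := Finset.card_pos.1 houtpos
    have heA : e ∈ A := (Finset.mem_filter.1 hemem).1
    have hetail : D.tail e = w := (Finset.mem_filter.1 hemem).2
    by_cases hhead : D.head e = v
    · exact ⟨[e], ⟨hetail, hhead⟩, by simp [heA]⟩
    · set A' := A.erase e with hA'
      have hcard' : A'.card ≤ n := by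
        rw [hA', Finset.card_erase_of_mem heA]
        omega
      have hinpos : 0 < (D.insF A (D.head e)).card :=
        Finset.card_pos.2 ⟨e, by simp [insF, Finset.mem_filter, heA]⟩
      have hcons' : ∀ u, u ≠ v → (D.insF A' u).card ≤ (D.outsF A' u).card := by
        intro u huv
        rw [hA', D.insF_erase A e heA, D.outsF_erase A e heA]
        have h3 := hcons u huv
        by_cases h2 : D.tail e = u
        · have huw : u = w := by rw [← h2, hetail]
          subst huw
          rw [if_pos h2]
          by_cases h1 : D.head e = u
          · rw [if_pos h1]; omega
          · rw [if_neg h1]; omega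
        · rw [if_neg h2]
          by_cases h1 : D.head e = u
          · rw [if_pos h1]
            have h4 : 1 ≤ (D.insF A u).card :=
              Finset.card_pos.2 ⟨e, by simp [insF, Finset.mem_filter, heA, h1]⟩
            omega
          · rw [if_neg h1]; omega
      have hlt' : (D.insF A' (D.head e)).card < (D.outsF A' (D.head e)).card := by
        rw [hA', D.insF_erase A e heA, D.outsF_erase A e heA, if_pos rfl]
        have := hcons (D.head e) hhead
        by_cases h2 : D.tail e = D.head e
        · rw [if_pos h2]
          have : w = D.head e := by rw [← hetail, h2]
          subst this
          omega
        · rw [if_neg h2]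
          omega
      obtain ⟨es, hwalk, hsub⟩ := ih A' hcard' (D.head e) hcons' (Or.inl hlt')
      refine ⟨e :: es, ⟨hetail, hwalk⟩, ?_⟩
      intro x hx
      rcases List.mem_cons.1 hx with rfl | hx
      · exact heA
      · exact Finset.mem_of_mem_erase (hsub x hx)

theorem filter_sdiff_card {A : Finset E} {es : List E} (hnd : es.Nodup)
    (hsub : ∀ e ∈ es, e ∈ A) (q : E → Prop) [DecidablePred q] :
    ((A \ es.toFinset).filter (fun e => q e)).card
      = (A.filter (fun e => q e)).card - (es.filter (fun e => q e)).length ∧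
    (es.filter (fun e => q e)).length ≤ (A.filter (fun e => q e)).card := by
  have hsub2 : es.toFinset.filter (fun e => q e) ⊆ A.filter (fun e => q e) := by
    intro x hx
    simp only [Finset.mem_filter, List.mem_toFinset] at hx ⊢
    exact ⟨hsub x hx.1, hx.2⟩
  have hsd : (A \ es.toFinset).filter (fun e => q e)
      = A.filter (fun e => q e) \ es.toFinset.filter (fun e => q e) := by
    ext x
    simp only [Finset.mem_filter, Finset.mem_sdiff, List.mem_toFinset]
    tauto
  constructor
  · rw [hsd, Finset.card_sdiff_of_subset hsub2, toFinset_filter_card hnd]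
  · rw [← toFinset_filter_card hnd]
    exact Finset.card_le_card hsub2

/-- From a 0/1 flow to an edge-disjoint path system of the same value,
with paths inside the flow support. -/
theorem paths_of_flow {r v : V} (hv : v ≠ r) :
    ∀ (n : ℕ) (A : Finset E), A.card ≤ n → D.NFlow ↑A r v A →
    ∃ P : List (List E), P.length = (D.insF A v).card ∧
      (∀ p ∈ P, D.IsPathIn ↑A r v p) ∧ EdgeDisjoint P := by
  intro n
  induction n with
  | zero =>
    intro A hcard hflow
    have : A = ∅ := Finset.card_eq_zero.1 (le_antisymm hcard (Nat.zero_le _))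
    subst this
    exact ⟨[], by simp [insF], by simp, List.Pairwise.nil⟩
  | succ n ih =>
    intro A hcard hflow
    by_cases hzero : (D.insF A v).card = 0
    · exact ⟨[], by simp [hzero], by simp, List.Pairwise.nil⟩
    · have hval := D.flow_value hflow hv
      have houtr : 0 < (D.outsF A r).card := by omega
      obtain ⟨es₀, hwalk₀, hsub₀⟩ := D.exists_walk_in_flow v A.card A le_rfl r
        (fun u huv => by
          by_cases hur : u = r
          · subst hur; rw [hflow.2.2.1]; exact Nat.zero_le _
          · exact le_of_eq (hflow.2.1 u hur huv))
        (Or.inl (by rw [hflow.2.2.1]; omega))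
      obtain ⟨es, hwalk, hsub, hnodup⟩ := D.exists_path_of_walk hwalk₀
      have hesA : ∀ e ∈ es, e ∈ A := fun e he => hsub₀ e (hsub e he)
      have hne : es ≠ [] := by
        rintro rfl
        exact hv hwalk.symm
      have hpath : D.IsPathIn ↑A r v es := ⟨hwalk, fun e he => hesA e he, hnodup⟩
      have hndes : es.Nodup := D.path_edges_nodup hpath
      set A' := A \ es.toFinset with hA'
      have hlenpos : 0 < es.length := List.length_pos_iff.2 hne
      have hcard' : A'.card ≤ n := by
        rw [hA', Finset.card_sdiff_of_subset (by intro x hx; exact hesA x (List.mem_toFinset.1 hx))]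
        rw [List.toFinset_card_of_nodup hndes]
        omega
      have hsubA' : (A' : Set E) ⊆ ↑A := by
        rw [hA']; intro x hx; simp only [Finset.coe_sdiff, Set.mem_diff] at hx
        exact hx.1
      have hins' : ∀ u, (D.insF A' u).card = (D.insF A u).card
          - (es.filter (fun e => D.head e = u)).length :=
        fun u => (filter_sdiff_card hndes hesA _).1
      have houts' : ∀ u, (D.outsF A' u).card = (D.outsF A u).card
          - (es.filter (fun e => D.tail e = u)).length :=
        fun u => (filter_sdiff_card hndes hesA _).1
      have hinsle : ∀ u, (es.filter (fun e => D.head e = u)).length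
          ≤ (D.insF A u).card := fun u => (filter_sdiff_card hndes hesA _).2
      have houtsle : ∀ u, (es.filter (fun e => D.tail e = u)).length
          ≤ (D.outsF A u).card := fun u => (filter_sdiff_card hndes hesA _).2
      have hflow' : D.NFlow ↑A' r v A' := by
        refine ⟨le_refl _, ?_, ?_, ?_⟩
        · intro u hur huv
          rw [hins', houts', D.path_filter_head_tail hpath hne hur huv,
            hflow.2.1 u hur huv]
        · rw [hins']
          have := hflow.2.2.1
          omega
        · rw [houts']
          have := hflow.2.2.2
          omega
      obtain ⟨P', hlen', hP', hdisj'⟩ := ih A' hcard' hflow'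
      have hinsv' : (D.insF A' v).card = (D.insF A v).card - 1 := by
        rw [hins', D.path_filter_head_v hpath hne]
      refine ⟨es :: P', ?_, ?_, ?_⟩
      · simp only [List.length_cons, hlen', hinsv']
        omega
      · intro p hp
        rcases List.mem_cons.1 hp with rfl | hp
        · exact hpath
        · exact D.pathIn_mono hsubA' (hP' p hp)
      · refine List.Pairwise.cons ?_ hdisj'
        intro q hq x hxes hxq
        have : x ∈ (A' : Set E) := (hP' q hq).2.1 x hxq
        rw [hA'] at this
        simp only [Finset.coe_sdiff, Set.mem_diff, List.coe_toFinset,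
          Set.mem_setOf_eq] at this
        exact this.2 hxes

end Digraph'

namespace Digraph'
set_option linter.unusedSectionVars false
set_option linter.unusedVariables false
set_option maxHeartbeats 1000000

variable {V E : Type} [Fintype V] [Fintype E] (D : Digraph' V E)

/-- The residual digraph of a 0/1 flow: forward edges and reversed edges. -/
def resid : Digraph' V (E × Bool) where
  tail s := match s with
    | (e, true) => D.tail e
    | (e, false) => D.head e
  head s := match s with
    | (e, true) => D.head e
    | (e, false) => D.tail e

@[simp] theorem resid_head_t (e : E) : D.resid.head (e, true) = D.head e := rfl
@[simp] theorem resid_head_f (e : E) : D.resid.head (e, false) = D.tail e := rfl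
@[simp] theorem resid_tail_t (e : E) : D.resid.tail (e, true) = D.tail e := rfl
@[simp] theorem resid_tail_f (e : E) : D.resid.tail (e, false) = D.head e := rfl

/-- Admissible residual steps with respect to `H` and the flow `A`. -/
def residOK (D' : Digraph' V E) (H : Set E) (A : Finset E) : Set (E × Bool) :=
  {s | match s with
    | (e, true) => e ∈ H ∧ e ∉ A
    | (e, false) => e ∈ A}

/-- Residual reachability. -/
def Reach (H : Set E) (A : Finset E) (r u : V) : Prop :=
  ∃ es, D.resid.IsWalk r u es ∧ ∀ s ∈ es, s ∈ D.residOK H A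

theorem reach_refl (H : Set E) (A : Finset E) (r : V) : D.Reach H A r r :=
  ⟨[], rfl, by simp⟩

theorem reach_fwd {H : Set E} {A : Finset E} {r : V} {e : E}
    (h : D.Reach H A r (D.tail e)) (heH : e ∈ H) (heA : e ∉ A) :
    D.Reach H A r (D.head e) := by
  obtain ⟨es, hw, hok⟩ := h
  refine ⟨es ++ [(e, true)], ?_, ?_⟩
  · rw [D.resid.isWalk_append]
    exact ⟨D.tail e, hw, by exact ⟨rfl, rfl⟩⟩
  · intro s hs
    rcases List.mem_append.1 hs with hs | hs
    · exact hok s hs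
    · simp only [List.mem_singleton] at hs
      subst hs
      exact ⟨heH, heA⟩

theorem reach_bwd {H : Set E} {A : Finset E} {r : V} {e : E}
    (h : D.Reach H A r (D.head e)) (heA : e ∈ A) :
    D.Reach H A r (D.tail e) := by
  obtain ⟨es, hw, hok⟩ := h
  refine ⟨es ++ [(e, false)], ?_, ?_⟩
  · rw [D.resid.isWalk_append]
    exact ⟨D.head e, hw, by exact ⟨rfl, rfl⟩⟩
  · intro s hs
    rcases List.mem_append.1 hs with hs | hs
    · exact hok s hs
    · simp only [List.mem_singleton] at hs
      subst hs
      exact heA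

theorem resid_filter_head (es : List (E × Bool)) (u : V) :
    (es.filter (fun s => D.resid.head s = u)).length
      = (es.filter (fun s => s.2 = true ∧ D.head s.1 = u)).length
        + (es.filter (fun s => s.2 = false ∧ D.tail s.1 = u)).length := by
  induction es with
  | nil => simp
  | cons s tl ih =>
    obtain ⟨e, b⟩ := s
    cases b
    · by_cases h : D.tail e = u <;> simp [List.filter_cons, h, ih] <;> omega
    · by_cases h : D.head e = u <;> simp [List.filter_cons, h, ih] <;> omega

theorem resid_filter_tail (es : List (E × Bool)) (u : V) :
    (es.filter (fun s => D.resid.tail s = u)).length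
      = (es.filter (fun s => s.2 = true ∧ D.tail s.1 = u)).length
        + (es.filter (fun s => s.2 = false ∧ D.head s.1 = u)).length := by
  induction es with
  | nil => simp
  | cons s tl ih =>
    obtain ⟨e, b⟩ := s
    cases b
    · by_cases h : D.head e = u <;> simp [List.filter_cons, h, ih] <;> omega
    · by_cases h : D.tail e = u <;> simp [List.filter_cons, h, ih] <;> omega

theorem filter_map_fst (es : List (E × Bool)) (b : Bool) (q : E → Prop)
    [DecidablePred q] :
    (((es.filter (fun s => s.2 = b)).map Prod.fst).filter (fun e => q e)).length
      = (es.filter (fun s => s.2 = b ∧ q s.1)).length := by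
  induction es with
  | nil => simp
  | cons s tl ih =>
    obtain ⟨e, b'⟩ := s
    by_cases h1 : b' = b
    · subst h1
      by_cases h2 : q e <;> simp [List.filter_cons, h2, ih]
    · simp [List.filter_cons, h1, ih]

theorem card_filter_update {A : Finset E} {bl fl : List E} (hbnd : bl.Nodup)
    (hfnd : fl.Nodup) (hbsub : ∀ e ∈ bl, e ∈ A) (hfdis : ∀ e ∈ fl, e ∉ A)
    (q : E → Prop) [DecidablePred q] :
    (((A \ bl.toFinset) ∪ fl.toFinset).filter (fun e => q e)).card
        + (bl.filter (fun e => q e)).length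
      = (A.filter (fun e => q e)).card + (fl.filter (fun e => q e)).length := by
  have hdis : Disjoint (A \ bl.toFinset) fl.toFinset := by
    rw [Finset.disjoint_right]
    intro x hx
    rw [List.mem_toFinset] at hx
    simp only [Finset.mem_sdiff, not_and]
    intro hxA
    exact absurd hxA (hfdis x hx)
  rw [Finset.filter_union, Finset.card_union_of_disjoint
    (Finset.disjoint_filter_filter hdis)]
  have h1 := (filter_sdiff_card hbnd hbsub q).1
  have h2 := (filter_sdiff_card hbnd hbsub q).2
  have h3 : (fl.toFinset.filter (fun e => q e)).card
      = (fl.filter (fun e => q e)).length := toFinset_filter_card hfnd q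
  omega

/-- Flow augmentation along a residual path. -/
theorem augment {H : Set E} {r v : V} {A : Finset E} (hr : ∀ e, D.head e ≠ r)
    (hv : v ≠ r) (hflow : D.NFlow H r v A) (hreach : D.Reach H A r v) :
    ∃ A' : Finset E, D.NFlow H r v A' ∧
      (D.insF A' v).card = (D.insF A v).card + 1 ∧
      ∀ e ∈ A, D.head e = v → e ∈ A' := by
  classical
  obtain ⟨es₀, hw₀, hok₀⟩ := hreach
  obtain ⟨es, hw, hsub, hnd⟩ := D.resid.exists_path_of_walk hw₀
  have hok : ∀ s ∈ es, s ∈ D.residOK H A := fun s hs => hok₀ s (hsub s hs)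
  have hne : es ≠ [] := by
    rintro rfl
    exact hv hw.symm
  -- step lists
  set bl : List E := (es.filter (fun s => s.2 = false)).map Prod.fst with hbl
  set fl : List E := (es.filter (fun s => s.2 = true)).map Prod.fst with hfl
  have hesnd : es.Nodup := (hnd.of_cons).of_map _
  have hbnd : bl.Nodup := by
    rw [hbl]
    refine (hesnd.filter _).map_on ?_
    intro x hx y hy hxy
    have hx2 := (List.mem_filter.1 hx).2
    have hy2 := (List.mem_filter.1 hy).2
    simp only [decide_eq_true_eq] at hx2 hy2
    exact Prod.ext hxy (hx2.trans hy2.symm)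
  have hfnd : fl.Nodup := by
    rw [hfl]
    refine (hesnd.filter _).map_on ?_
    intro x hx y hy hxy
    have hx2 := (List.mem_filter.1 hx).2
    have hy2 := (List.mem_filter.1 hy).2
    simp only [decide_eq_true_eq] at hx2 hy2
    exact Prod.ext hxy (hx2.trans hy2.symm)
  have hblmem : ∀ e ∈ bl, (e, false) ∈ es := by
    intro e he
    rw [hbl] at he
    obtain ⟨s, hs, hfst⟩ := List.mem_map.1 he
    have hs2 := (List.mem_filter.1 hs).2
    simp only [decide_eq_true_eq] at hs2
    have : s = (e, false) := Prod.ext hfst hs2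
    rw [← this]
    exact (List.mem_filter.1 hs).1
  have hflmem : ∀ e ∈ fl, (e, true) ∈ es := by
    intro e he
    rw [hfl] at he
    obtain ⟨s, hs, hfst⟩ := List.mem_map.1 he
    have hs2 := (List.mem_filter.1 hs).2
    simp only [decide_eq_true_eq] at hs2
    have : s = (e, true) := Prod.ext hfst hs2
    rw [← this]
    exact (List.mem_filter.1 hs).1
  have hbsub : ∀ e ∈ bl, e ∈ A := fun e he => hok _ (hblmem e he)
  have hfdis : ∀ e ∈ fl, e ∉ A := fun e he => (hok _ (hflmem e he)).2
  have hfH : ∀ e ∈ fl, e ∈ H := fun e he => (hok _ (hflmem e he)).1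
  set A' : Finset E := (A \ bl.toFinset) ∪ fl.toFinset with hA'
  -- counting abbreviations
  have hins : ∀ u, (D.insF A' u).card
        + (es.filter (fun s => s.2 = false ∧ D.head s.1 = u)).length
      = (D.insF A u).card
        + (es.filter (fun s => s.2 = true ∧ D.head s.1 = u)).length := by
    intro u
    have := card_filter_update hbnd hfnd hbsub hfdis (fun e => D.head e = u)
    rw [hbl, hfl] at *
    rw [← filter_map_fst es false (fun e => D.head e = u),
      ← filter_map_fst es true (fun e => D.head e = u)]
    exact this
  have houts : ∀ u, (D.outsF A' u).card
        + (es.filter (fun s => s.2 = false ∧ D.tail s.1 = u)).length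
      = (D.outsF A u).card
        + (es.filter (fun s => s.2 = true ∧ D.tail s.1 = u)).length := by
    intro u
    have := card_filter_update hbnd hfnd hbsub hfdis (fun e => D.tail e = u)
    rw [← filter_map_fst es false (fun e => D.tail e = u),
      ← filter_map_fst es true (fun e => D.tail e = u)]
    exact this
  have hRH : ∀ u, (es.filter (fun s => D.resid.head s = u)).length
      = if u ∈ es.map D.resid.head then 1 else 0 :=
    fun u => D.resid.path_count_head hw hnd
  have hRT : ∀ u, (es.filter (fun s => D.resid.tail s = u)).length
      = if u ∈ es.map D.resid.tail then 1 else 0 :=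
    fun u => D.resid.path_count_tail hw hnd hne
  have hmemT : ∀ u, u ∈ es.map D.resid.tail
      ↔ (u = r ∨ (u ∈ es.map D.resid.head ∧ u ≠ v)) :=
    fun u => D.resid.mem_tails_iff hw hnd hne
  -- v is not a residual tail
  have hvT : v ∉ es.map D.resid.tail := by
    rw [hmemT]
    simp [hv]
  have hRTv : (es.filter (fun s => D.resid.tail s = v)).length = 0 := by
    rw [hRT, if_neg hvT]
  have hftv : (es.filter (fun s => s.2 = true ∧ D.tail s.1 = v)).length = 0 ∧
      (es.filter (fun s => s.2 = false ∧ D.head s.1 = v)).length = 0 := by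
    have := D.resid_filter_tail es v
    omega
  -- no backward step uses an in-edge of v in the other direction:
  have hbtv : (es.filter (fun s => s.2 = false ∧ D.tail s.1 = v)).length = 0 := by
    rw [List.length_eq_zero_iff]
    rw [List.filter_eq_nil_iff]
    rintro ⟨e, b⟩ hs
    simp only [decide_eq_true_eq, not_and]
    rintro rfl hev
    have heA : e ∈ A := hok _ hs
    have : e ∈ D.outsF A v := by simp [outsF, Finset.mem_filter, heA, hev]
    rw [Finset.card_eq_zero.1 hflow.2.2.2] at this
    exact absurd this (Finset.notMem_empty e)
  have hvH : v ∈ es.map D.resid.head := D.resid.path_head_mem hw hne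
  have hRHv : (es.filter (fun s => D.resid.head s = v)).length = 1 := by
    rw [hRH, if_pos hvH]
  have hfhv : (es.filter (fun s => s.2 = true ∧ D.head s.1 = v)).length = 1 := by
    have := D.resid_filter_head es v
    omega
  refine ⟨A', ⟨?_, ?_, ?_, ?_⟩, ?_, ?_⟩
  · -- support
    intro x hx
    rw [hA'] at hx
    simp only [Finset.coe_union, Finset.coe_sdiff, Set.mem_union, Set.mem_diff,
      Finset.mem_coe, List.coe_toFinset, Set.mem_setOf_eq, List.mem_toFinset] at hx
    rcases hx with ⟨hxA, -⟩ | hxf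
    · exact hflow.1 hxA
    · exact hfH x (by simpa using hxf)
  · -- conservation
    intro u hur huv
    have h1 := hins u
    have h2 := houts u
    have h3 := D.resid_filter_head es u
    have h4 := D.resid_filter_tail es u
    have h5 := hRH u
    have h6 := hRT u
    have h7 : (u ∈ es.map D.resid.tail) ↔ (u ∈ es.map D.resid.head) := by
      rw [hmemT]
      simp [hur, huv]
    have h8 := hflow.2.1 u hur huv
    by_cases h9 : u ∈ es.map D.resid.head
    · rw [if_pos h9] at h5
      rw [if_pos (h7.2 h9)] at h6
      omega
    · rw [if_neg h9] at h5
      rw [if_neg (fun hh => h9 (h7.1 hh))] at h6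
      omega
  · -- nothing enters r
    rw [Finset.card_eq_zero]
    refine Finset.filter_false_of_mem ?_
    intro x hx
    exact hr x
  · -- nothing leaves v
    have h2 := houts v
    have h4 := D.resid_filter_tail es v
    have houtv := hflow.2.2.2
    omega
  · -- value increased
    have h1 := hins v
    omega
  · -- in-edges of v preserved
    intro e heA hev
    rw [hA']
    simp only [Finset.mem_union, Finset.mem_sdiff, List.mem_toFinset]
    left
    refine ⟨heA, ?_⟩
    intro hbl'
    have : (e, false) ∈ es := hblmem e hbl'
    have : v ∈ es.map D.resid.tail := by
      refine List.mem_map.2 ⟨(e, false), this, ?_⟩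
      simp [hev]
    exact hvT this

/-- From a maximum (non-augmentable) flow to a minimum cut. -/
theorem cut_of_unreach {H : Set E} {r v : V} {A : Finset E}
    (hflow : D.NFlow H r v A) (hvr : v ≠ r) (hunreach : ¬ D.Reach H A r v) :
    ∃ W : Set V, v ∈ W ∧ r ∉ W ∧ D.rhoN H W = (D.insF A v).card := by
  set W : Set V := {u | ¬ D.Reach H A r u} with hW
  have hvW : v ∈ W := hunreach
  have hrW : r ∉ W := by
    simp only [hW, Set.mem_setOf_eq, not_not]
    exact D.reach_refl H A r
  refine ⟨W, hvW, hrW, ?_⟩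
  have hcut : D.cutEdges H W = D.cutEdges (↑A) W := by
    ext e
    rw [D.mem_cutEdges, D.mem_cutEdges]
    constructor
    · rintro ⟨heH, hh, ht⟩
      refine ⟨?_, hh, ht⟩
      by_contra heA
      simp only [hW, Set.mem_setOf_eq, not_not] at ht
      exact hh (D.reach_fwd ht heH (by simpa using heA))
    · rintro ⟨heA, hh, ht⟩
      exact ⟨hflow.1 heA, hh, ht⟩
  have hleav : D.cutEdges (↑A) {u | u ∉ W} = ∅ := by
    rw [Finset.eq_empty_iff_forall_notMem]
    intro e he
    obtain ⟨heA, hh, ht⟩ := D.mem_cutEdges.1 he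
    have h1 : D.head e ∉ W := hh
    rw [hW] at h1
    simp only [Set.mem_setOf_eq, not_not] at h1
    have h2 : D.tail e ∈ W := by
      by_contra h3
      exact ht h3
    rw [hW] at h2
    simp only [Set.mem_setOf_eq] at h2
    exact h2 (D.reach_bwd h1 (by simpa using heA))
  have hfc := D.flow_cut' hflow hvr hvW hrW
  rw [hleav] at hfc
  simp only [Finset.card_empty, add_zero] at hfc
  rw [rhoN, hcut, ← hfc]

/-- `lam` is at most every cut. -/
theorem lam_le_rho {H : Set E} {r v : V} {W : Set V} (hv : v ≠ r)
    (hvW : v ∈ W) (hrW : r ∉ W) : D.lam H r v ≤ D.rhoN H W := by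
  obtain ⟨P, hlen, hP, hdisj⟩ := D.lam_spec (F := H) (r := r) hv
  obtain ⟨A, hflow, hval⟩ := D.flow_of_paths hv P hP hdisj
  rw [← hlen, ← hval]
  exact D.flow_le_cut hflow hv hvW hrW

theorem nflow_mono {H H' : Set E} (hsub : H ⊆ H') {r v : V} {A : Finset E}
    (hflow : D.NFlow H r v A) : D.NFlow H' r v A :=
  ⟨fun x hx => hsub (hflow.1 hx), hflow.2⟩

theorem nflow_self {H : Set E} {r v : V} {A : Finset E} (hflow : D.NFlow H r v A) :
    D.NFlow (↑A) r v A :=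
  ⟨Set.Subset.rfl, hflow.2⟩

/-- The value of a flow is at most `lam` of its support graph. -/
theorem flow_value_le_lam {H : Set E} {r v : V} {A : Finset E} (hv : v ≠ r)
    (hflow : D.NFlow H r v A) : (D.insF A v).card ≤ D.lam H r v := by
  obtain ⟨P, hlen, hP, hdisj⟩ := D.paths_of_flow hv A.card A le_rfl (D.nflow_self hflow)
  rw [← hlen] at *
  exact D.le_lam hv (fun p hp => D.pathIn_mono hflow.1 (hP p hp)) hdisj

/-- Menger's theorem, hard direction: a cut attaining `lam`. -/
theorem menger {H : Set E} {r v : V} (hr : ∀ e, D.head e ≠ r) (hv : v ≠ r) :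
    ∃ W : Set V, v ∈ W ∧ r ∉ W ∧ D.rhoN H W = D.lam H r v := by
  classical
  set S : Finset (Finset E) := Finset.univ.filter (fun A => D.NFlow H r v A) with hS
  have hSne : (∅ : Finset E) ∈ S := by
    simp only [hS, Finset.mem_filter, Finset.mem_univ, true_and]
    exact ⟨by simp, fun u _ _ => by simp [insF, outsF], by simp [insF],
      by simp [outsF]⟩
  obtain ⟨A, hAS, hAmax⟩ := S.exists_max_image (fun A => (D.insF A v).card) ⟨∅, hSne⟩
  have hAflow : D.NFlow H r v A := (Finset.mem_filter.1 hAS).2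
  have hunreach : ¬ D.Reach H A r v := by
    intro hreach
    obtain ⟨A', hflow', hval', -⟩ := D.augment hr hv hAflow hreach
    have : A' ∈ S := by
      simp only [hS, Finset.mem_filter, Finset.mem_univ, true_and]
      exact hflow'
    have := hAmax A' this
    omega
  obtain ⟨W, hvW, hrW, hrho⟩ := D.cut_of_unreach hAflow hv hunreach
  refine ⟨W, hvW, hrW, ?_⟩
  rw [hrho]
  refine le_antisymm ?_ ?_
  · exact D.flow_value_le_lam hv hAflow
  · -- lam ≤ value of the max flow
    obtain ⟨P, hlen, hP, hdisj⟩ := D.lam_spec (F := H) (r := r) hv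
    obtain ⟨A₀, hflow₀, hval₀⟩ := D.flow_of_paths hv P hP hdisj
    have : A₀ ∈ S := by
      simp only [hS, Finset.mem_filter, Finset.mem_univ, true_and]
      exact hflow₀
    have := hAmax A₀ this
    omega

end Digraph'

namespace Digraph'
set_option linter.unusedSectionVars false
set_option linter.unusedVariables false
set_option maxHeartbeats 1000000

variable {V E : Type} [Fintype V] [Fintype E] (D : Digraph' V E)

theorem rho_submod (H : Set E) (W1 W2 : Set V) :
    D.rhoN H (W1 ∪ W2) + D.rhoN H (W1 ∩ W2) ≤ D.rhoN H W1 + D.rhoN H W2 := by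
  classical
  unfold rhoN cutEdges
  rw [Finset.card_filter, Finset.card_filter, Finset.card_filter,
    Finset.card_filter, ← Finset.sum_add_distrib, ← Finset.sum_add_distrib]
  refine Finset.sum_le_sum ?_
  intro e _
  by_cases hH : e ∈ H
  · by_cases h1 : D.head e ∈ W1 <;> by_cases h2 : D.head e ∈ W2 <;>
      by_cases h3 : D.tail e ∈ W1 <;> by_cases h4 : D.tail e ∈ W2 <;>
      simp [hH, h1, h2, h3, h4, Set.mem_union, Set.mem_inter_iff] <;> omega
  · simp [hH]

theorem cutEdges_diff_singleton (H : Set E) (e : E) (W : Set V) :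
    D.cutEdges (H \ {e}) W = (D.cutEdges H W).erase e := by
  ext x
  simp only [cutEdges, Finset.mem_erase, Finset.mem_filter, Finset.mem_univ,
    true_and, Set.mem_diff, Set.mem_singleton_iff]
  tauto

theorem rho_del_mem {H : Set E} {e : E} {W : Set V} (hmem : e ∈ D.cutEdges H W) :
    D.rhoN (H \ {e}) W = D.rhoN H W - 1 := by
  rw [rhoN, rhoN, D.cutEdges_diff_singleton, Finset.card_erase_of_mem hmem]

theorem rho_del_not_mem {H : Set E} {e : E} {W : Set V}
    (hmem : e ∉ D.cutEdges H W) : D.rhoN (H \ {e}) W = D.rhoN H W := by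
  rw [rhoN, rhoN, D.cutEdges_diff_singleton, Finset.erase_eq_of_notMem hmem]

/-- Lovász's deletion lemma. -/
theorem deletion_lemma {G : Set E} {r : V} (hr : ∀ e, D.head e ≠ r) {e : E}
    (heG : e ∈ G)
    (hlam : D.lam (G \ {e}) r (D.head e) = D.lam G r (D.head e)) :
    ∀ u, u ≠ r → D.lam (G \ {e}) r u = D.lam G r u := by
  intro u hu
  refine le_antisymm (D.lam_mono Set.diff_subset hu) ?_
  have htr : D.head e ≠ r := hr e
  obtain ⟨W, huW, hrW, hrho⟩ := D.menger (H := G \ {e}) hr hu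
  by_cases hent : e ∈ D.cutEdges G W
  · obtain ⟨-, htW, htlW⟩ := D.mem_cutEdges.1 hent
    obtain ⟨Wt, htWt, hrWt, hrhot⟩ := D.menger (H := G) hr htr
    have htailWt : D.tail e ∈ Wt := by
      by_contra htl
      have hmemt : e ∈ D.cutEdges G Wt := D.mem_cutEdges.2 ⟨heG, htWt, htl⟩
      have h1 := D.rho_del_mem hmemt
      have h2 : D.lam (G \ {e}) r (D.head e) ≤ D.rhoN (G \ {e}) Wt :=
        D.lam_le_rho htr htWt hrWt
      have h3 : 1 ≤ D.rhoN G Wt := Finset.card_pos.2 ⟨e, hmemt⟩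
      omega
    have hsubmod := D.rho_submod G Wt W
    have hl1 : D.lam G r (D.head e) ≤ D.rhoN G (Wt ∩ W) :=
      D.lam_le_rho htr ⟨htWt, htW⟩ (fun h => hrWt h.1)
    have hentint : e ∈ D.cutEdges G (Wt ∩ W) :=
      D.mem_cutEdges.2 ⟨heG, ⟨htWt, htW⟩, fun h => htlW h.2⟩
    have h4 : D.lam (G \ {e}) r (D.head e) ≤ D.rhoN (G \ {e}) (Wt ∩ W) :=
      D.lam_le_rho htr ⟨htWt, htW⟩ (fun h => hrWt h.1)
    have h5 := D.rho_del_mem hentint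
    have h6 : 1 ≤ D.rhoN G (Wt ∩ W) := Finset.card_pos.2 ⟨e, hentint⟩
    have h7 : D.lam G r u ≤ D.rhoN G (Wt ∪ W) :=
      D.lam_le_rho hu (Or.inr huW) (fun h => h.elim hrWt hrW)
    have h8 := D.rho_del_mem hent
    have h9 : 1 ≤ D.rhoN G W := Finset.card_pos.2 ⟨e, hent⟩
    omega
  · have heq := D.rho_del_not_mem hent
    calc D.lam G r u ≤ D.rhoN G W := D.lam_le_rho hu huW hrW
      _ = D.rhoN (G \ {e}) W := heq.symm
      _ = D.lam (G \ {e}) r u := hrho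

/-- Repeated augmentation up to value `lam`. -/
theorem pump {G : Set E} {r t : V} (hr : ∀ e, D.head e ≠ r) (ht : t ≠ r) :
    ∀ (j : ℕ) (A : Finset E), D.NFlow G r t A →
      (D.insF A t).card + j ≤ D.lam G r t →
      ∃ A', D.NFlow G r t A' ∧ (D.insF A' t).card = (D.insF A t).card + j ∧
        ∀ e ∈ A, D.head e = t → e ∈ A' := by
  intro j
  induction j with
  | zero => exact fun A hflow _ => ⟨A, hflow, by simp, fun e he _ => he⟩
  | succ n ih =>
    intro A hflow hle
    have hreach : D.Reach G A r t := by
      by_contra hun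
      obtain ⟨W, htW, hrW, hrho⟩ := D.cut_of_unreach hflow ht hun
      have := D.lam_le_rho (H := G) ht htW hrW
      omega
    obtain ⟨A₁, hflow₁, hval₁, hkeep₁⟩ := D.augment hr ht hflow hreach
    obtain ⟨A', hflow', hval', hkeep'⟩ := ih A₁ hflow₁ (by omega)
    exact ⟨A', hflow', by omega, fun e he hh => hkeep' e (hkeep₁ e he hh) hh⟩

/-- The key exchange step: in a graph with no deletable non-`F` edge over a
flame `F`, every vertex has in-degree equal to `lam`. -/
theorem flame_step {F G : Set E} {r t : V} (hr : ∀ e, D.head e ≠ r)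
    (hF : D.IsFlame r F) (hFG : F ⊆ G) (ht : t ≠ r)
    (hnodel : ∀ e, e ∈ G → e ∉ F →
      D.lam (G \ {e}) r (D.head e) < D.lam G r (D.head e)) :
    D.indeg G t = D.lam G r t := by
  classical
  refine le_antisymm ?_ (D.lam_le_indeg ht)
  by_contra hgt
  push_neg at hgt
  obtain ⟨P, hlen, hP, hdisj⟩ := D.lam_spec (F := F) (r := r) (v := t) ht
  obtain ⟨A₁, hflow₁, hval₁⟩ := D.flow_of_paths ht P hP hdisj
  have hd : (D.insF A₁ t).card = D.lam F r t := by rw [hval₁, hlen]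
  have hIfin : (D.inEdges F t).Finite := Set.toFinite _
  have hIn : ∀ e, e ∈ D.inEdges F t → e ∈ A₁ := by
    have hsub : D.insF A₁ t ⊆ hIfin.toFinset := by
      intro x hx
      rw [Set.Finite.mem_toFinset]
      rw [insF, Finset.mem_filter] at hx
      exact ⟨hflow₁.1 hx.1, hx.2⟩
    have hcard : hIfin.toFinset.card ≤ (D.insF A₁ t).card := by
      rw [hd, ← hF t ht, indeg, Set.ncard_eq_toFinset_card _ hIfin]
    have heq : D.insF A₁ t = hIfin.toFinset :=
      Finset.eq_of_subset_of_card_le hsub hcard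
    intro e he
    have : e ∈ D.insF A₁ t := by
      rw [heq, Set.Finite.mem_toFinset]
      exact he
    exact (Finset.mem_filter.1 this).1
  have hdleL : D.lam F r t ≤ D.lam G r t := D.lam_mono hFG ht
  obtain ⟨As, hflows, hvals, hkeeps⟩ := D.pump hr ht (D.lam G r t - D.lam F r t)
    A₁ (D.nflow_mono hFG hflow₁) (by omega)
  set J := D.insF As t with hJ
  have hJcard : J.card = D.lam G r t := by rw [hJ, hvals, hd]; omega
  have hGfin : (D.inEdges G t).Finite := Set.toFinite _
  have hJsub : J ⊆ hGfin.toFinset := by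
    intro x hx
    rw [Set.Finite.mem_toFinset]
    rw [hJ, insF, Finset.mem_filter] at hx
    exact ⟨hflows.1 hx.1, hx.2⟩
  have hbig : D.lam G r t + 1 ≤ hGfin.toFinset.card := by
    rw [← Set.ncard_eq_toFinset_card _ hGfin]
    exact hgt
  obtain ⟨e, heIn, heJ⟩ : ∃ e, e ∈ hGfin.toFinset ∧ e ∉ J := by
    by_contra hcon
    push_neg at hcon
    have hsu : hGfin.toFinset ⊆ J := fun x hx => hcon x hx
    have := Finset.card_le_card hsu
    omega
  rw [Set.Finite.mem_toFinset] at heIn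
  obtain ⟨heG, hhead⟩ := heIn
  have heF : e ∉ F := by
    intro hef
    have h1 : e ∈ A₁ := hIn e ⟨hef, hhead⟩
    have h2 := hkeeps e h1 hhead
    exact heJ (Finset.mem_filter.2 ⟨h2, hhead⟩)
  have heAs : e ∉ As := fun h => heJ (Finset.mem_filter.2 ⟨h, hhead⟩)
  have hflowe : D.NFlow (G \ {e}) r t As := by
    refine ⟨?_, hflows.2⟩
    intro x hx
    refine ⟨hflows.1 hx, ?_⟩
    rw [Set.mem_singleton_iff]
    rintro rfl
    exact heAs hx
  have hge : D.lam G r t ≤ D.lam (G \ {e}) r t := by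
    rw [← hJcard, hJ]
    exact D.flow_value_le_lam ht hflowe
  have hlt := hnodel e heG heF
  rw [hhead] at hlt
  omega

/-- Every flame extends to a flame with the same connectivity as the
ambient graph. -/
theorem exists_flame_ext {r : V} (hr : ∀ e, D.head e ≠ r) {F : Set E}
    (hF : D.IsFlame r F) :
    ∀ (n : ℕ) (G : Set E), F ⊆ G → (G \ F).ncard ≤ n →
      ∃ G', F ⊆ G' ∧ D.IsFlame r G' ∧ ∀ u, u ≠ r → D.lam G' r u = D.lam G r u := by
  intro n
  induction n with
  | zero =>
    intro G hFG hcard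
    have hGF : G = F := by
      refine Set.Subset.antisymm ?_ hFG
      intro x hx
      by_contra hxF
      have hmem : x ∈ G \ F := ⟨hx, hxF⟩
      have : (G \ F).ncard = 0 := le_antisymm hcard (Nat.zero_le _)
      rw [Set.ncard_eq_zero (Set.toFinite _)] at this
      rw [this] at hmem
      exact hmem
    exact ⟨G, hFG, hGF ▸ hF, fun u _ => rfl⟩
  | succ n ih =>
    intro G hFG hcard
    by_cases hdel : ∃ e, e ∈ G ∧ e ∉ F ∧
        D.lam (G \ {e}) r (D.head e) = D.lam G r (D.head e)
    · obtain ⟨e, heG, heF, hlam⟩ := hdel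
      have hdl := D.deletion_lemma hr heG hlam
      have hsub : F ⊆ G \ {e} := by
        intro x hx
        refine ⟨hFG hx, ?_⟩
        rw [Set.mem_singleton_iff]
        rintro rfl
        exact heF hx
      have hmeas : ((G \ {e}) \ F).ncard ≤ n := by
        have h1 : (G \ {e}) \ F = (G \ F) \ {e} := by
          ext x
          simp only [Set.mem_diff, Set.mem_singleton_iff]
          tauto
        have h2 : e ∈ G \ F := ⟨heG, heF⟩
        rw [h1]
        have := Set.ncard_diff_singleton_lt_of_mem h2 (Set.toFinite _)
        omega
      obtain ⟨G', h1, h2, h3⟩ := ih (G \ {e}) hsub hmeas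
      exact ⟨G', h1, h2, fun u hu => (h3 u hu).trans (hdl u hu)⟩
    · push_neg at hdel
      refine ⟨G, hFG, ?_, fun u _ => rfl⟩
      intro t ht
      refine D.flame_step hr hF hFG ht ?_
      intro e heG heF
      have hne := hdel e heG heF
      have hle := D.lam_mono (F := G \ {e}) (G := G) Set.diff_subset (hr e)
      omega

end Digraph'

open Digraph' in
/-- Every ⊆-maximal `r`-flame subgraph preserves all local edge-connectivities
from `r`. -/
theorem stmt2 {V E : Type} [Fintype V] [Fintype E] (D : Digraph' V E) (r : V)
    (hr : ∀ e, D.head e ≠ r) (F : Set E) (hF : D.IsFlame r F)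
    (hmax : ∀ F' : Set E, D.IsFlame r F' → F ⊆ F' → F' = F) :
    ∀ v, v ≠ r → D.lam F r v = D.lam Set.univ r v := by
  intro v hv
  obtain ⟨G', h1, h2, h3⟩ := D.exists_flame_ext hr hF
    ((Set.univ \ F).ncard) Set.univ (Set.subset_univ F) le_rfl
  have hGF : G' = F := hmax G' h2 h1
  rw [← h3 v hv, hGF]
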